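/- Let n be a positive integer and K ≥ 1 a real number. Let a^{jk} : ℝⁿ → ℝ (1 ≤ j,k ≤ n) be continuously differentiable with a^{jk} = a^{kj}, |a^{jk}| ≤ K and |∂_{x_l} a^{jk}| ≤ K; let β : ℝⁿ → ℝ be twice continuously differentiable with 0 ≤ β ≤ 1 and first and second partial derivatives bounded by K; let γ : ℝ → ℝ be continuously differentiable with γ(t) > 0 for all t. Fix real numbers m ≥ 1, λ ≥ 1, μ ≥ 1, set α(x) = e^{μ(6m+β(x))} − μe^{μ(6m+6)}, ξ(t,x) = γ(t)·e^{μ(6m+β(x))}, φ(t,x) = γ(t)·α(x) and ℓ(t,x) = λφ(t,x). Then there exists a constant C depending only on n and K such that for all (t,x), |(Σ_{j,k=1}^n ∂_{x_k}(a^{jk}·∂_{x_j}ℓ)(t,x))·∂_tℓ(t,x) − (γ′(t)/γ(t))·λ²μ²ξ(t,x)·φ(t,x)·Ψ(x)| ≤ C·|γ′(t)/γ(t)|·λ²μ·ξ(t,x)·|φ(t,x)|, where Ψ(x) = Σ_{j,k=1}^n a^{jk}(x)·∂_jβ(x)·∂_kβ(x). -/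

import Mathlib

/-- The `j`-th partial derivative of a function on `ℝⁿ`. -/
noncomputable def pd {n : ℕ} (f : EuclideanSpace ℝ (Fin n) → ℝ) (j : Fin n)
    (x : EuclideanSpace ℝ (Fin n)) : ℝ :=
  fderiv ℝ f x (EuclideanSpace.single j 1)

/-- The Carleman weight exponent `ℓ(x) = λγ(e^{μ(6m+β(x))} - μe^{μ(6m+6)})` at frozen time. -/
noncomputable def ellFun {n : ℕ} (m lam mu γ : ℝ) (β : EuclideanSpace ℝ (Fin n) → ℝ)
    (x : EuclideanSpace ℝ (Fin n)) : ℝ :=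
  lam * γ * (Real.exp (mu * (6 * m + β x)) - mu * Real.exp (mu * (6 * m + 6)))

variable {n : ℕ}

lemma pd_mul (f g : EuclideanSpace ℝ (Fin n) → ℝ) (j : Fin n) (x)
    (hf : DifferentiableAt ℝ f x) (hg : DifferentiableAt ℝ g x) :
    pd (fun y => f y * g y) j x = pd f j x * g x + f x * pd g j x := by
  simp [pd, fderiv_fun_mul hf hg]; ring

lemma pd_const_mul (c : ℝ) (f : EuclideanSpace ℝ (Fin n) → ℝ) (j : Fin n) (x)
    (hf : DifferentiableAt ℝ f x) :
    pd (fun y => c * f y) j x = c * pd f j x := by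
  simp [pd, fderiv_const_mul hf]

lemma pd_exp (f : EuclideanSpace ℝ (Fin n) → ℝ) (j : Fin n) (x)
    (hf : DifferentiableAt ℝ f x) :
    pd (fun y => Real.exp (f y)) j x = Real.exp (f x) * pd f j x := by
  have h := (Real.hasDerivAt_exp (f x)).comp_hasFDerivAt x hf.hasFDerivAt
  have : fderiv ℝ (fun y => Real.exp (f y)) x = Real.exp (f x) • fderiv ℝ f x := h.fderiv
  simp [pd, this]

lemma pd_sub_const (c : ℝ) (f : EuclideanSpace ℝ (Fin n) → ℝ) (j : Fin n) (x) :
    pd (fun y => f y - c) j x = pd f j x := by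
  simp [pd, fderiv_sub_const]

lemma pd_const_add (c : ℝ) (f : EuclideanSpace ℝ (Fin n) → ℝ) (j : Fin n) (x) :
    pd (fun y => c + f y) j x = pd f j x := by
  simp [pd, fderiv_const_add]

lemma pd_contDiff (β : EuclideanSpace ℝ (Fin n) → ℝ) (hβ : ContDiff ℝ 2 β) (j : Fin n) :
    ContDiff ℝ 1 (pd β j) :=
  (hβ.fderiv_right (by norm_num)).clm_apply contDiff_const

/-- The expansion `Σ_{j,k}(a^{jk}ℓ_j)_k · ℓ_t = (γ_t/γ)[λ²μ²ξφΨ + O(λ²)μξφ]` from the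
estimate of the zeroth-order coefficient in the Carleman identity, with a constant
depending only on `n` and `K`. -/
theorem stmt11 (n : ℕ) (hn : 0 < n) (K : ℝ) (hK : 1 ≤ K) :
    ∃ C : ℝ, 0 < C ∧
      ∀ (a : Fin n → Fin n → EuclideanSpace ℝ (Fin n) → ℝ)
        (β : EuclideanSpace ℝ (Fin n) → ℝ) (γ : ℝ → ℝ) (m lam mu : ℝ),
        (∀ j k, ContDiff ℝ 1 (a j k)) →
        (∀ j k, a j k = a k j) →
        (∀ j k x, |a j k x| ≤ K) →
        (∀ j k l x, |pd (a j k) l x| ≤ K) →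
        ContDiff ℝ 2 β →
        (∀ x, 0 ≤ β x ∧ β x ≤ 1) →
        (∀ j x, |pd β j x| ≤ K) →
        (∀ j k x, |pd (pd β j) k x| ≤ K) →
        ContDiff ℝ 1 γ →
        (∀ t, 0 < γ t) →
        1 ≤ m → 1 ≤ lam → 1 ≤ mu →
        ∀ (t : ℝ) (x : EuclideanSpace ℝ (Fin n)),
          |(∑ j : Fin n, ∑ k : Fin n,
              pd (fun y => a j k y * pd (ellFun m lam mu (γ t) β) j y) k x) *
              deriv (fun s => lam * (γ s *
                (Real.exp (mu * (6 * m + β x)) - mu * Real.exp (mu * (6 * m + 6))))) t -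
              (deriv γ t / γ t) * lam ^ 2 * mu ^ 2 *
                (γ t * Real.exp (mu * (6 * m + β x))) *
                (γ t * (Real.exp (mu * (6 * m + β x)) - mu * Real.exp (mu * (6 * m + 6)))) *
                (∑ j : Fin n, ∑ k : Fin n, a j k x * pd β j x * pd β k x)|
            ≤ C * |deriv γ t / γ t| * lam ^ 2 * mu *
                (γ t * Real.exp (mu * (6 * m + β x))) *
                |γ t * (Real.exp (mu * (6 * m + β x)) - mu * Real.exp (mu * (6 * m + 6)))| := by
  have h0 : (0:ℝ) < n := by exact_mod_cast hn
  refine ⟨2 * n ^ 2 * K ^ 2, by positivity, ?_⟩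
  intro a β γ m lam mu ha hsym haK hdaK hβ hβ01 hβK hβ2K hγ hγpos hm hlam hmu t x
  have hγt : γ t ≠ 0 := ne_of_gt (hγpos t)
  set c : ℝ := mu * Real.exp (mu * (6 * m + 6)) with hc
  set g : EuclideanSpace ℝ (Fin n) → ℝ := fun y => Real.exp (mu * (6 * m + β y)) with hg
  have hβd : Differentiable ℝ β := hβ.differentiable (by norm_num)
  have hEd : Differentiable ℝ (fun y => mu * (6 * m + β y)) :=
    ((differentiable_const _).add hβd).const_mul mu
  have hgd : Differentiable ℝ g := hEd.exp
  have hpdβc : ∀ j, ContDiff ℝ 1 (pd β j) := pd_contDiff β hβ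
  have hpdβd : ∀ j, Differentiable ℝ (pd β j) := fun j => (hpdβc j).differentiable (by norm_num)
  -- derivative of g
  have hpdg : ∀ (j : Fin n) (y), pd g j y = g y * (mu * pd β j y) := by
    intro j y
    have h1 : pd (fun z => mu * (6 * m + β z)) j y = mu * pd β j y := by
      rw [pd_const_mul mu (fun z => 6 * m + β z) j y ((differentiable_const _).add hβd).differentiableAt,
        pd_const_add]
    rw [show g = fun z => Real.exp ((fun w => mu * (6 * m + β w)) z) from rfl,
      pd_exp _ j y hEd.differentiableAt, h1]
  -- derivative of ellFun
  have hpdell : ∀ (j : Fin n) (y), pd (ellFun m lam mu (γ t) β) j y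
      = (lam * γ t * mu) * (g y * pd β j y) := by
    intro j y
    have h0 : ellFun m lam mu (γ t) β = fun z => (lam * γ t) * (g z - c) := rfl
    rw [h0, pd_const_mul _ _ j y (hgd.differentiableAt.sub_const c), pd_sub_const, hpdg]
    ring
  -- the inner sum terms
  have hterm : ∀ (j k : Fin n),
      pd (fun y => a j k y * pd (ellFun m lam mu (γ t) β) j y) k x
      = (lam * γ t * mu) * g x * (mu * (a j k x * pd β j x * pd β k x))
        + (lam * γ t * mu) * g x *
          (pd (a j k) k x * pd β j x + a j k x * pd (pd β j) k x) := by
    intro j k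
    have hfe : (fun y => a j k y * pd (ellFun m lam mu (γ t) β) j y)
        = fun y => a j k y * ((lam * γ t * mu) * (g y * pd β j y)) :=
      funext fun y => by rw [hpdell]
    have hin : DifferentiableAt ℝ (fun y => (lam * γ t * mu) * (g y * pd β j y)) x :=
      (hgd.differentiableAt.mul (hpdβd j).differentiableAt).const_mul _
    rw [hfe, pd_mul _ _ k x ((ha j k).differentiable (by norm_num)).differentiableAt hin,
      pd_const_mul _ (fun y => g y * pd β j y) k x (hgd.differentiableAt.mul (hpdβd j).differentiableAt),
      pd_mul _ _ k x hgd.differentiableAt (hpdβd j).differentiableAt, hpdg]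
    ring
  set Ψ : ℝ := ∑ j : Fin n, ∑ k : Fin n, a j k x * pd β j x * pd β k x with hΨ
  set S0 : ℝ := ∑ j : Fin n, ∑ k : Fin n,
      (pd (a j k) k x * pd β j x + a j k x * pd (pd β j) k x) with hS0
  have hsum : (∑ j : Fin n, ∑ k : Fin n,
      pd (fun y => a j k y * pd (ellFun m lam mu (γ t) β) j y) k x)
      = (lam * γ t * mu) * g x * (mu * Ψ) + (lam * γ t * mu) * g x * S0 := by
    rw [hΨ, hS0]
    simp only [Finset.mul_sum]
    rw [← Finset.sum_add_distrib]
    refine Finset.sum_congr rfl fun j _ => ?_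
    rw [← Finset.sum_add_distrib]
    exact Finset.sum_congr rfl fun k _ => hterm j k
  -- time derivative
  set A : ℝ := Real.exp (mu * (6 * m + β x)) - mu * Real.exp (mu * (6 * m + 6)) with hA
  have hD : deriv (fun s => lam * (γ s * A)) t = lam * (deriv γ t * A) := by
    rw [deriv_const_mul _ ((hγ.differentiable (by norm_num) t).mul_const A),
      deriv_mul_const (hγ.differentiable (by norm_num) t)]
  have hGA : g x = Real.exp (mu * (6 * m + β x)) := rfl
  -- rewrite the whole expression
  have key : (∑ j : Fin n, ∑ k : Fin n,
              pd (fun y => a j k y * pd (ellFun m lam mu (γ t) β) j y) k x) *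
              deriv (fun s => lam * (γ s * A)) t -
              (deriv γ t / γ t) * lam ^ 2 * mu ^ 2 * (γ t * g x) * (γ t * A) * Ψ
      = lam ^ 2 * γ t * deriv γ t * mu * g x * A * S0 := by
    rw [hsum, hD]
    field_simp
    ring
  rw [key]
  -- bound S0
  have hgpos : 0 < g x := Real.exp_pos _
  have hK0 : (0:ℝ) ≤ K := le_trans zero_le_one hK
  have hS0bd : |S0| ≤ 2 * (n:ℝ) ^ 2 * K ^ 2 := by
    calc |S0| ≤ ∑ j : Fin n, |∑ k : Fin n,
        (pd (a j k) k x * pd β j x + a j k x * pd (pd β j) k x)| :=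
          Finset.abs_sum_le_sum_abs _ _
      _ ≤ ∑ j : Fin n, ∑ k : Fin n,
          |pd (a j k) k x * pd β j x + a j k x * pd (pd β j) k x| :=
          Finset.sum_le_sum fun j _ => Finset.abs_sum_le_sum_abs _ _
      _ ≤ ∑ j : Fin n, ∑ k : Fin n, (2 * K ^ 2) := by
          refine Finset.sum_le_sum fun j _ => Finset.sum_le_sum fun k _ => ?_
          calc |pd (a j k) k x * pd β j x + a j k x * pd (pd β j) k x|
              ≤ |pd (a j k) k x * pd β j x| + |a j k x * pd (pd β j) k x| := abs_add_le _ _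
            _ = |pd (a j k) k x| * |pd β j x| + |a j k x| * |pd (pd β j) k x| := by
                rw [abs_mul, abs_mul]
            _ ≤ K * K + K * K := by
                gcongr <;> first
                  | exact hdaK j k k x | exact hβK j x | exact haK j k x | exact hβ2K j k x
            _ = 2 * K ^ 2 := by ring
      _ = 2 * (n:ℝ) ^ 2 * K ^ 2 := by
          simp [Finset.sum_const, Finset.card_univ]; ring
  -- final comparison
  have hRHS : 2 * (n:ℝ) ^ 2 * K ^ 2 * |deriv γ t / γ t| * lam ^ 2 * mu * (γ t * g x)
        * |γ t * A|
      = (lam ^ 2 * γ t * |deriv γ t| * mu * g x * |A|) * (2 * (n:ℝ) ^ 2 * K ^ 2) := by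
    rw [abs_div, abs_of_pos (hγpos t), abs_mul, abs_of_pos (hγpos t)]
    field_simp
  rw [hRHS]
  have hLHS : |lam ^ 2 * γ t * deriv γ t * mu * g x * A * S0|
      = (lam ^ 2 * γ t * |deriv γ t| * mu * g x * |A|) * |S0| := by
    have h1 : (0:ℝ) ≤ lam ^ 2 * γ t := by
      have := hγpos t; positivity
    rw [abs_mul, abs_mul, abs_mul, abs_mul, abs_mul, abs_of_nonneg h1,
      abs_of_nonneg (by linarith : (0:ℝ) ≤ mu), abs_of_pos hgpos]
  rw [hLHS]
  have hM : 0 ≤ lam ^ 2 * γ t * |deriv γ t| * mu * g x * |A| := by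
    have := hγpos t; have := abs_nonneg (deriv γ t); have := abs_nonneg A
    positivity
  exact mul_le_mul_of_nonneg_left hS0bd hM
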